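/- For an odd prime p and a partition λ = (λ₁,…,λ_k) of n, the multinomial coefficient satisfies (pn)!/((pλ₁)!···(pλ_k)!) ≡ n!/(λ₁!···λ_k!) (mod p²). -/

import Mathlib

/-- Product of successive binomial coefficients giving the multinomial coefficient. -/
def lbp : List ℕ → ℕ
  | [] => 1
  | a :: T => (a + T.sum).choose a * lbp T

lemma lbp_mul (L : List ℕ) : (L.map Nat.factorial).prod * lbp L = L.sum.factorial := by
  induction L with
  | nil => simp [lbp]
  | cons a T ih =>
    simp only [List.map_cons, List.prod_cons, List.sum_cons, lbp]
    have h := Nat.choose_mul_factorial_mul_factorial (Nat.le_add_right a T.sum)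
    rw [Nat.add_sub_cancel_left] at h
    calc a.factorial * (T.map Nat.factorial).prod * ((a + T.sum).choose a * lbp T)
        = (a + T.sum).choose a * a.factorial * ((T.map Nat.factorial).prod * lbp T) := by ring
      _ = (a + T.sum).choose a * a.factorial * T.sum.factorial := by rw [ih]
      _ = (a + T.sum).factorial := by rw [← h]

lemma lbp_div (L : List ℕ) : L.sum.factorial / (L.map Nat.factorial).prod = lbp L := by
  rw [← lbp_mul]
  exact Nat.mul_div_cancel_left _ (List.prod_pos (by simp [Nat.factorial_pos]))

lemma choose_p_mul (p : ℕ) (hp : p.Prime) :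
    ∀ a b : ℕ, (p * a).choose (p * b) ≡ a.choose b [MOD p ^ 2] := by
  haveI : Fact p.Prime := ⟨hp⟩
  intro a
  induction a with
  | zero =>
    intro b
    cases b with
    | zero => simp; rfl
    | succ b =>
      have : p * (b + 1) ≠ 0 := Nat.mul_ne_zero hp.ne_zero (Nat.succ_ne_zero b)
      simp [Nat.choose_eq_zero_of_lt (Nat.pos_of_ne_zero this)]
      rfl
  | succ a ih =>
    intro b
    have hkey : p * (a + 1) = p * a + p := by ring
    rw [hkey, Nat.add_choose_eq]
    cases b with
    | zero => simp; rfl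
    | succ b' =>
      set t := Finset.HasAntidiagonal.antidiagonal (p * (b' + 1)) with ht
      set f : ℕ × ℕ → ℕ := fun ij => (p * a).choose ij.1 * p.choose ij.2 with hf
      have hne : ((p * (b' + 1), 0) : ℕ × ℕ) ≠ (p * b', p) := by
        intro h
        exact hp.ne_zero (congrArg Prod.snd h).symm
      set S : Finset (ℕ × ℕ) := {(p * (b' + 1), 0), (p * b', p)} with hS
      have hsub : S ⊆ t := by
        intro x hx
        rw [hS] at hx
        rcases Finset.mem_insert.mp hx with h | h
        · rw [h, ht, Finset.HasAntidiagonal.mem_antidiagonal]; rfl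
        · rw [Finset.mem_singleton.mp h, ht, Finset.HasAntidiagonal.mem_antidiagonal]; ring
      have hsplit := Finset.sum_sdiff (f := f) hsub
      have hdvd : p ^ 2 ∣ ∑ x ∈ t \ S, f x := by
        apply Finset.dvd_sum
        rintro ⟨i, j⟩ hx
        rw [Finset.mem_sdiff, ht, Finset.HasAntidiagonal.mem_antidiagonal] at hx
        obtain ⟨hij, hxS⟩ := hx
        have hij' : i + j = p * (b' + 1) := hij
        have hexp : p * (b' + 1) = p * b' + p := by ring
        rcases Nat.lt_trichotomy j p with hj | hj | hj
        · rcases Nat.eq_zero_or_pos j with hj0 | hj0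
          · exfalso
            apply hxS
            rw [hS]
            subst hj0
            have hi : i = p * (b' + 1) := by omega
            rw [hi]
            exact Finset.mem_insert_self _ _
          · have h1 : p ∣ p.choose j := hp.dvd_choose_self hj0.ne' hj
            have h2 : p ∣ (p * a).choose i := by
              have hl := Choose.choose_modEq_choose_mod_mul_choose_div_nat
                (n := p * a) (k := i) (p := p)
              have hpa : (p * a) % p = 0 := Nat.mul_mod_right p a
              have himod : i % p ≠ 0 := by
                intro h0
                have hdi : p ∣ i := Nat.dvd_of_mod_eq_zero h0
                have hdij : p ∣ i + j := by rw [hij']; exact Dvd.intro _ rfl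
                have hdj : p ∣ j := (Nat.dvd_add_right hdi).mp hdij
                exact absurd (Nat.le_of_dvd hj0 hdj) (not_le.mpr hj)
              rw [hpa, Nat.choose_eq_zero_of_lt (Nat.pos_of_ne_zero himod), zero_mul] at hl
              exact (Nat.modEq_zero_iff_dvd).mp hl
            rw [hf, pow_two]
            exact mul_dvd_mul h2 h1
        · exfalso
          apply hxS
          rw [hS]
          have hi : i = p * b' := by omega
          rw [hi, hj]
          exact Finset.mem_insert_of_mem (Finset.mem_singleton_self _)
        · have : p.choose j = 0 := Nat.choose_eq_zero_of_lt hj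
          simp [hf, this]
      have hsumS : ∑ x ∈ S, f x = (p * a).choose (p * (b' + 1)) + (p * a).choose (p * b') := by
        rw [hS, Finset.sum_pair hne, hf]
        simp
      have heq : ∑ x ∈ t, f x = (∑ x ∈ t \ S, f x) +
          ((p * a).choose (p * (b' + 1)) + (p * a).choose (p * b')) := by
        rw [← hsumS, hsplit]
      rw [heq]
      have h0 : (∑ x ∈ t \ S, f x) ≡ 0 [MOD p ^ 2] := (Nat.modEq_zero_iff_dvd).mpr hdvd
      calc (∑ x ∈ t \ S, f x) + ((p * a).choose (p * (b' + 1)) + (p * a).choose (p * b'))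
          ≡ 0 + (a.choose (b' + 1) + a.choose b') [MOD p ^ 2] :=
            Nat.ModEq.add h0 (Nat.ModEq.add (ih (b' + 1)) (ih b'))
        _ = (a + 1).choose (b' + 1) := by
            rw [Nat.zero_add, Nat.choose_succ_succ, Nat.add_comm]

lemma lbp_map_modEq (p : ℕ) (hp : p.Prime) (L : List ℕ) :
    lbp (L.map (p * ·)) ≡ lbp L [MOD p ^ 2] := by
  induction L with
  | nil => rfl
  | cons a T ih =>
    simp only [List.map_cons, lbp]
    have hsum : ((T.map (p * ·)).sum) = p * T.sum := by
      simpa using List.sum_map_mul_left T id p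
    rw [hsum]
    have : p * a + p * T.sum = p * (a + T.sum) := by ring
    rw [this]
    exact Nat.ModEq.mul (choose_p_mul p hp (a + T.sum) a) ih

theorem multinomial_congruence (p n : ℕ) (hp : p.Prime) (hodd : Odd p)
    (L : List ℕ) (hpos : ∀ x ∈ L, 1 ≤ x) (hsort : L.Pairwise (· ≥ ·))
    (hsum : L.sum = n) :
    (p * n).factorial / (L.map (fun x => (p * x).factorial)).prod ≡
      n.factorial / (L.map (fun x => x.factorial)).prod [MOD p ^ 2] := by
  subst hsum
  have h1 : L.map (fun x => (p * x).factorial) = (L.map (p * ·)).map Nat.factorial := by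
    rw [List.map_map]; rfl
  have h2 : p * L.sum = (L.map (p * ·)).sum := by
    simpa using (List.sum_map_mul_left L id p).symm
  have h3 : L.map (fun x => x.factorial) = L.map Nat.factorial := rfl
  rw [h1, h2, h3, lbp_div, lbp_div]
  exact lbp_map_modEq p hp L
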